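/- arXiv:1104.4180 — 4 statements merged into one kernel-verified Lean document; each statement's English description precedes it below -/
import Mathlib

section
/- If L : ℕᵈ → ℝ \ {0} is slowly varying at infinity (i.e., for every a ∈ ℕᵈ with positive coordinates, L(a₁x₁,…,a_d x_d)/L(x₁,…,x_d) → 1 as all xₖ → ∞) and L is nondecreasing in each coordinate, then the function H : ℝ₊ᵈ → ℝ defined by H(x) = L(⌊x₁ ∨ 1⌋, …, ⌊x_d ∨ 1⌋) is slowly varying at infinity on ℝ₊ᵈ, i.e., for every a ∈ ℝᵈ with positive coordinates, H(a₁x₁,…,a_d x_d)/H(x₁,…,x_d) → 1 as all xₖ → ∞. -/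
open MeasureTheory Filter ProbabilityTheory
open scoped Classical BigOperators

/-- Covariance of two real random variables. -/
noncomputable def cov {Ω : Type*} [MeasurableSpace Ω] (μ : Measure Ω) (X Y : Ω → ℝ) : ℝ :=
  ∫ ω, (X ω - ∫ ω', X ω' ∂μ) * (Y ω - ∫ ω', Y ω' ∂μ) ∂μ

/-- Variance of a real random variable. -/
noncomputable def var {Ω : Type*} [MeasurableSpace Ω] (μ : Measure Ω) (X : Ω → ℝ) : ℝ :=
  cov μ X X

/-- Positive (weak) association of a family of real random variables: for all finite
disjoint index sets and all bounded coordinatewise nondecreasing Lipschitz functions,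
the covariance is nonnegative. -/
def PosAssoc {Ω ι : Type*} [MeasurableSpace Ω] (μ : Measure Ω) (X : ι → Ω → ℝ) : Prop :=
  ∀ (I J : Finset ι), Disjoint I J →
    ∀ (f : (I → ℝ) → ℝ) (g : (J → ℝ) → ℝ),
      Monotone f → Monotone g →
      (∃ K, LipschitzWith K f) → (∃ K, LipschitzWith K g) →
      (∃ C, ∀ y, |f y| ≤ C) → (∃ C, ∀ y, |g y| ≤ C) →
      0 ≤ cov μ (fun ω => f fun i => X i ω) (fun ω => g fun j => X j ω)

/-- `L : ℕ^d → ℝ` is slowly varying at infinity. -/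
def SlowlyVarying (d : ℕ) (L : (Fin d → ℕ) → ℝ) : Prop :=
  ∀ a : Fin d → ℕ, (∀ k, 0 < a k) →
    Tendsto (fun x : Fin d → ℕ => L (fun k => a k * x k) / L x) atTop (nhds 1)

/-- `K : ℕ → ℝ` is slowly varying at infinity. -/
def SlowlyVarying1 (K : ℕ → ℝ) : Prop :=
  ∀ a : ℕ, 0 < a → Tendsto (fun r : ℕ => K (a * r) / K r) atTop (nhds 1)

/-- Uniform integrability of a family of random variables. -/
def UnifInt {Ω ι : Type*} [MeasurableSpace Ω] (μ : Measure Ω) (Y : ι → Ω → ℝ) : Prop :=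
  ∀ ε : ℝ, 0 < ε → ∃ c : ℝ, ∀ i, ∫ ω in {ω | c ≤ |Y i ω|}, |Y i ω| ∂μ ≤ ε

/-- Strict stationarity of a random field on ℤ^d. -/
def StrictStationary {Ω : Type*} [MeasurableSpace Ω] (μ : Measure Ω) {d : ℕ}
    (X : (Fin d → ℤ) → Ω → ℝ) : Prop :=
  ∀ (k : ℕ) (j : Fin k → (Fin d → ℤ)) (u : Fin d → ℤ),
    Measure.map (fun ω (i : Fin k) => X (j i + u) ω) μ =
      Measure.map (fun ω (i : Fin k) => X (j i) ω) μ

/-- The block `U_n = {j ∈ ℤ^d : 1 ≤ j ≤ n}`. -/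
noncomputable def blockU {d : ℕ} (n : Fin d → ℕ) : Finset (Fin d → ℤ) :=
  Finset.Icc (fun _ => 1) (fun k => (n k : ℤ))

/-- Partial sum of the field over the block `U_n`. -/
noncomputable def partialSum {Ω : Type*} {d : ℕ} (X : (Fin d → ℤ) → Ω → ℝ)
    (n : Fin d → ℕ) (ω : Ω) : ℝ :=
  ∑ j ∈ blockU n, X j ω

/-- `K_X(n) = Σ_{-n ≤ j ≤ n} R(j)` (sup-norm blocks). -/
noncomputable def KsumF {d : ℕ} (R : (Fin d → ℤ) → ℝ) (n : Fin d → ℕ) : ℝ :=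
  ∑ j ∈ Finset.Icc (fun k => -(n k : ℤ)) (fun k => (n k : ℤ)), R j

/-- `K(r) = Σ_{‖j‖ ≤ r} R(j)` (Euclidean balls). -/
noncomputable def Keucl {d : ℕ} (R : (Fin d → ℤ) → ℝ) (r : ℕ) : ℝ :=
  ∑ j ∈ (Finset.Icc (fun _ => -(r : ℤ)) (fun _ => (r : ℤ))).filter
      (fun j => Real.sqrt (∑ k, ((j k : ℝ)) ^ 2) ≤ (r : ℝ)), R j

private lemma corner_abs_bound (a1 a2 b1 b2 u v : ℝ)
    (h1 : a1 ≤ u) (h2 : u ≤ a2) (h3 : b1 ≤ v) (h4 : v ≤ b2)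
    (hsign : (0 < a1 ∧ 0 < b1) ∨ (a2 < 0 ∧ b2 < 0)) :
    |u / v - 1| ≤ max |a1 / b2 - 1| |a2 / b1 - 1| := by
  rcases hsign with ⟨ha, hb⟩ | ⟨ha, hb⟩
  · have hv : 0 < v := lt_of_lt_of_le hb h3
    have hlow : a1 / b2 ≤ u / v := div_le_div₀ (le_trans ha.le h1) h1 hv h4
    have hhigh : u / v ≤ a2 / b1 :=
      div_le_div₀ (le_trans (le_trans ha.le h1) h2) h2 hb h3
    exact abs_le_max_abs_abs (by linarith) (by linarith)
  · have hu : u < 0 := lt_of_le_of_lt h2 ha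
    have hv : v < 0 := lt_of_le_of_lt h4 hb
    have h5 : (-a2) / (-b1) ≤ (-u) / (-v) :=
      div_le_div₀ (by linarith) (by linarith) (by linarith) (by linarith)
    have h6 : (-u) / (-v) ≤ (-a1) / (-b2) :=
      div_le_div₀ (by linarith) (by linarith) (by linarith) (by linarith)
    rw [neg_div_neg_eq, neg_div_neg_eq] at h5 h6
    have hmax := abs_le_max_abs_abs (show a2 / b1 - 1 ≤ u / v - 1 by linarith)
      (show u / v - 1 ≤ a1 / b2 - 1 by linarith)
    simpa [max_comm] using hmax

/-- a coordinatewise nondecreasing slowly varying `L : ℕ^d → ℝ \ {0}` extends to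
the slowly varying function `H(x) = L(⌊x ∨ 1⌋)` on ℝ₊^d. -/
theorem stmt0 {d : ℕ} (L : (Fin d → ℕ) → ℝ) (hL0 : ∀ x, L x ≠ 0)
    (hsv : SlowlyVarying d L) (hmono : Monotone L) :
    ∀ a : Fin d → ℝ, (∀ k, 0 < a k) →
      Tendsto (fun x : Fin d → ℝ =>
          L (fun k => ⌊max (a k * x k) 1⌋₊) / L (fun k => ⌊max (x k) 1⌋₊))
        atTop (nhds 1) := by
  intro a ha
  -- choose integer parameters q and p
  obtain ⟨q, hq⟩ : ∃ q : Fin d → ℕ, ∀ k, 0 < q k ∧ (2 : ℝ) ≤ a k * q k := by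
    refine ⟨fun k => ⌈2 / a k⌉₊ + 1, fun k => ⟨Nat.succ_pos _, ?_⟩⟩
    have h1 : 2 / a k ≤ ((⌈2 / a k⌉₊ + 1 : ℕ) : ℝ) := by
      have := Nat.le_ceil (2 / a k)
      push_cast
      linarith
    have h3 : a k * (2 / a k) ≤ a k * ((⌈2 / a k⌉₊ + 1 : ℕ) : ℝ) :=
      mul_le_mul_of_nonneg_left h1 (ha k).le
    have h4 : a k * (2 / a k) = 2 := by
      rw [mul_div_assoc']
      exact mul_div_cancel_left₀ 2 (ha k).ne'
    linarith
  have hqpos : ∀ k, 0 < q k := fun k => (hq k).1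
  have hq1 : ∀ k, 1 ≤ q k := hqpos
  have haq : ∀ k, (2 : ℝ) ≤ a k * q k := fun k => (hq k).2
  obtain ⟨p, hp⟩ : ∃ p : Fin d → ℕ, ∀ k, 4 ≤ p k ∧ (2 * a k * q k : ℝ) ≤ p k := by
    refine ⟨fun k => ⌈2 * a k * (q k : ℝ)⌉₊, fun k => ⟨?_, Nat.le_ceil _⟩⟩
    have h1 : (4 : ℝ) ≤ 2 * a k * q k := by nlinarith [haq k]
    have h2 : (4 : ℝ) ≤ ((⌈2 * a k * (q k : ℝ)⌉₊ : ℕ) : ℝ) := le_trans h1 (Nat.le_ceil _)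
    exact_mod_cast h2
  have hp4 : ∀ k, 4 ≤ p k := fun k => (hp k).1
  have hpge : ∀ k, (2 * a k * q k : ℝ) ≤ p k := fun k => (hp k).2
  have hppos : ∀ k, 0 < p k := fun k => lt_of_lt_of_le (by norm_num) (hp4 k)
  set Mv : Fin d → ℕ := fun k => max (p k) (2 * q k) with hM_def
  have hMpos : ∀ k, 0 < Mv k := fun k => lt_of_lt_of_le (hppos k) (le_max_left _ _)
  -- the integer-argument function m(x)
  set mf : (Fin d → ℝ) → Fin d → ℕ := fun x k => ⌊max (x k) 1⌋₊ / q k with hmf_def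
  have hmtop : Tendsto mf atTop atTop := by
    rw [tendsto_atTop]
    intro b
    filter_upwards [eventually_ge_atTop (fun k => ((q k * b k + q k : ℕ) : ℝ))] with x hx
    rw [Pi.le_def]
    intro k
    have hxk : ((q k * b k + q k : ℕ) : ℝ) ≤ x k := hx k
    have h1 : q k * b k + q k ≤ ⌊max (x k) 1⌋₊ :=
      Nat.le_floor (le_trans hxk (le_max_left _ _))
    show b k ≤ ⌊max (x k) 1⌋₊ / q k
    rw [Nat.le_div_iff_mul_le (hqpos k)]
    calc b k * q k ≤ q k * b k + q k := by rw [mul_comm]; exact Nat.le_add_right _ _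
      _ ≤ _ := h1
  -- slowly varying limits composed with m
  have hsv2q := (hsv (fun k => 2 * q k) (fun k => Nat.mul_pos two_pos (hqpos k))).comp hmtop
  have hsvp := (hsv p hppos).comp hmtop
  have hsvq := (hsv q hqpos).comp hmtop
  have hsvM := (hsv Mv hMpos).comp hmtop
  have hA : Tendsto (fun x => L (mf x) / L (fun k => 2 * q k * mf x k)) atTop (nhds 1) := by
    have h := hsv2q.inv₀ one_ne_zero
    simp only [Function.comp_def, inv_div, inv_one] at h
    exact h
  have hC : Tendsto (fun x => L (fun k => p k * mf x k) / L (fun k => q k * mf x k))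
      atTop (nhds 1) := by
    have h := hsvp.div hsvq one_ne_zero
    simp only [Function.comp_def, div_one] at h
    refine h.congr fun y => ?_
    simp only [Pi.div_apply]
    rw [div_div_div_cancel_right₀]
    exact hL0 _
  have hF : Tendsto (fun x => max |L (mf x) / L (fun k => 2 * q k * mf x k) - 1|
      |L (fun k => p k * mf x k) / L (fun k => q k * mf x k) - 1|) atTop (nhds 0) := by
    have h1 : Tendsto (fun x => |L (mf x) / L (fun k => 2 * q k * mf x k) - 1|)
        atTop (nhds 0) := by simpa using (hA.sub_const 1).abs
    have h2 : Tendsto (fun x => |L (fun k => p k * mf x k) / L (fun k => q k * mf x k) - 1|)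
        atTop (nhds 0) := by simpa using (hC.sub_const 1).abs
    simpa using h1.max h2
  rw [tendsto_iff_dist_tendsto_zero]
  apply squeeze_zero' (Eventually.of_forall fun x => dist_nonneg) _ hF
  have hMpos' : ∀ᶠ x in atTop, 0 < L (fun k => Mv k * mf x k) / L (mf x) := by
    have := hsvM.eventually (eventually_gt_nhds (show (0:ℝ) < 1 by norm_num))
    simpa only [Function.comp_def] using this
  filter_upwards [eventually_ge_atTop (fun k => (q k : ℝ)), hMpos'] with x hx hx2
  -- coordinatewise facts
  have hx1 : ∀ k, (q k : ℝ) ≤ x k := fun k => hx k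
  have hxk1 : ∀ k, (1 : ℝ) ≤ x k := fun k =>
    le_trans (by exact_mod_cast Nat.one_le_cast.mpr (hq1 k)) (hx1 k)
  have hmax : ∀ k, max (x k) 1 = x k := fun k => max_eq_left (hxk1 k)
  have hqn : ∀ k, q k ≤ ⌊max (x k) 1⌋₊ := fun k =>
    Nat.le_floor (le_trans (hx1 k) (le_max_left _ _))
  have hm1 : ∀ k, 1 ≤ mf x k := fun k => (Nat.one_le_div_iff (hqpos k)).2 (hqn k)
  have hqm_le_n : ∀ k, q k * mf x k ≤ ⌊max (x k) 1⌋₊ := fun k => by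
    rw [mul_comm]; exact Nat.div_mul_le_self _ _
  have hn_lt : ∀ k, ⌊max (x k) 1⌋₊ < (mf x k + 1) * q k := fun k =>
    (Nat.div_lt_iff_lt_mul (hqpos k)).1 (Nat.lt_succ_self _)
  have hn_le2 : ∀ k, ⌊max (x k) 1⌋₊ ≤ 2 * q k * mf x k := by
    intro k
    have h1 := hn_lt k
    have h2 : (mf x k + 1) * q k ≤ 2 * q k * mf x k := by
      have h3 : mf x k + 1 ≤ 2 * mf x k := by have := hm1 k; omega
      calc (mf x k + 1) * q k ≤ (2 * mf x k) * q k := Nat.mul_le_mul_right _ h3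
        _ = 2 * q k * mf x k := by ring
    exact le_of_lt (lt_of_lt_of_le h1 h2)
  have hnx : ∀ k, ((⌊max (x k) 1⌋₊ : ℕ) : ℝ) ≤ x k := by
    intro k
    rw [hmax k]
    exact Nat.floor_le (by linarith [hxk1 k])
  have hxn : ∀ k, x k < ((mf x k : ℝ) + 1) * q k := by
    intro k
    have h1 : x k < (⌊max (x k) 1⌋₊ : ℝ) + 1 := by
      rw [hmax k]
      exact Nat.lt_floor_add_one _
    have h2 : (⌊max (x k) 1⌋₊ : ℝ) + 1 ≤ ((mf x k : ℝ) + 1) * q k := by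
      have h3 := hn_lt k
      have h4 : ((⌊max (x k) 1⌋₊ + 1 : ℕ) : ℝ) ≤ (((mf x k + 1) * q k : ℕ) : ℝ) :=
        Nat.cast_le.mpr h3
      push_cast at h4
      linarith
    linarith
  have hmn' : ∀ k, mf x k ≤ ⌊max (a k * x k) 1⌋₊ := by
    intro k
    apply Nat.le_floor
    refine le_trans ?_ (le_max_left _ _)
    have c1 : (q k : ℝ) * mf x k ≤ x k := by
      have c2 : ((q k * mf x k : ℕ) : ℝ) ≤ ((⌊max (x k) 1⌋₊ : ℕ) : ℝ) :=
        Nat.cast_le.mpr (hqm_le_n k)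
      push_cast at c2
      linarith [hnx k]
    have hmn : (0 : ℝ) ≤ (mf x k : ℝ) := by positivity
    nlinarith [mul_le_mul_of_nonneg_left c1 (ha k).le,
      mul_le_mul_of_nonneg_right (haq k) hmn]
  have hn'p : ∀ k, ⌊max (a k * x k) 1⌋₊ ≤ p k * mf x k := by
    intro k
    have hm1r : (1 : ℝ) ≤ (mf x k : ℝ) := by exact_mod_cast hm1 k
    have hxlt := hxn k
    have hax : a k * x k ≤ (p k : ℝ) * mf x k := by
      nlinarith [mul_le_mul_of_nonneg_left hxlt.le (ha k).le,
        mul_le_mul_of_nonneg_right (hpge k) (le_trans zero_le_one hm1r),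
        mul_le_mul_of_nonneg_left hm1r (mul_nonneg (ha k).le (Nat.cast_nonneg (q k))),
        haq k, (ha k).le]
    have h1le : (1 : ℝ) ≤ ((p k * mf x k : ℕ) : ℝ) := by
      have h0 : 1 ≤ p k * mf x k :=
        Nat.one_le_iff_ne_zero.2 (Nat.mul_ne_zero (by have := hp4 k; omega)
          (by have := hm1 k; omega))
      exact_mod_cast h0
    have hb : max (a k * x k) 1 ≤ ((p k * mf x k : ℕ) : ℝ) := by
      apply max_le _ h1le
      push_cast
      linarith
    calc ⌊max (a k * x k) 1⌋₊ ≤ ⌊((p k * mf x k : ℕ) : ℝ)⌋₊ := Nat.floor_le_floor hb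
      _ = p k * mf x k := Nat.floor_natCast _
  -- monotonicity chains
  have v_m_n' : L (mf x) ≤ L (fun k => ⌊max (a k * x k) 1⌋₊) :=
    hmono (Pi.le_def.mpr fun k => hmn' k)
  have v_n'_p : L (fun k => ⌊max (a k * x k) 1⌋₊) ≤ L (fun k => p k * mf x k) :=
    hmono (Pi.le_def.mpr fun k => hn'p k)
  have v_q_n : L (fun k => q k * mf x k) ≤ L (fun k => ⌊max (x k) 1⌋₊) :=
    hmono (Pi.le_def.mpr fun k => hqm_le_n k)
  have v_n_2q : L (fun k => ⌊max (x k) 1⌋₊) ≤ L (fun k => 2 * q k * mf x k) :=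
    hmono (Pi.le_def.mpr fun k => hn_le2 k)
  have v_m_q : L (mf x) ≤ L (fun k => q k * mf x k) :=
    hmono (Pi.le_def.mpr fun k => Nat.le_mul_of_pos_left _ (hqpos k))
  have v_p_M : L (fun k => p k * mf x k) ≤ L (fun k => Mv k * mf x k) :=
    hmono (Pi.le_def.mpr fun k => Nat.mul_le_mul_right _ (le_max_left _ _))
  have v_2q_M : L (fun k => 2 * q k * mf x k) ≤ L (fun k => Mv k * mf x k) :=
    hmono (Pi.le_def.mpr fun k => Nat.mul_le_mul_right _ (le_max_right _ _))
  -- sign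
  have hsign : (0 < L (mf x) ∧ 0 < L (fun k => q k * mf x k)) ∨
      (L (fun k => p k * mf x k) < 0 ∧ L (fun k => 2 * q k * mf x k) < 0) := by
    rcases div_pos_iff.1 hx2 with ⟨hnum, hden⟩ | ⟨hnum, hden⟩
    · exact Or.inl ⟨hden, lt_of_lt_of_le hden v_m_q⟩
    · exact Or.inr ⟨lt_of_le_of_lt v_p_M hnum, lt_of_le_of_lt v_2q_M hnum⟩
  rw [Real.dist_eq]
  exact corner_abs_bound _ _ _ _ _ _ v_m_n' v_n'_p v_q_n v_n_2q hsign
end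

section
/- Let L : ℕᵈ → ℝ \ {0} be slowly varying at infinity and nondecreasing in each coordinate. Then there exist vectors q_n = (q_n⁽¹⁾,…,q_n⁽ᵈ⁾) ∈ ℕᵈ, indexed by n = (n₁,…,n_d) ∈ ℕᵈ, such that: (i) q_n⁽ᵏ⁾ ≤ n_k for all k; (ii) q_n⁽ᵏ⁾/n_k → 0 for each k as n → ∞; (iii) each q_n⁽ᵏ⁾ → ∞ as n → ∞; and (iv) L(n)/L(q_n) → 1 as n → ∞ (meaning all coordinates n₁,…,n_d tend to infinity). -/
open MeasureTheory Filter ProbabilityTheory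
open scoped Classical BigOperators

theorem sandwich_ratio {a b c ε : ℝ} (hb : b ≠ 0) (h1 : b ≤ a) (h2 : a ≤ c)
    (h : |c/b - 1| ≤ ε) : |a/b - 1| ≤ ε := by
  have e1 : a / b - 1 = (a - b) / b := by field_simp
  have e2 : c / b - 1 = (c - b) / b := by field_simp
  rw [e1, abs_div]
  rw [e2, abs_div] at h
  refine le_trans ?_ h
  refine (div_le_div_iff_of_pos_right (abs_pos.2 hb)).2 ?_
  rw [abs_of_nonneg (by linarith), abs_of_nonneg (by linarith)]; linarith

/-- for a coordinatewise nondecreasing slowly varying `L : ℕ^d → ℝ \ {0}` there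
are indices `q_n ≤ n` with `q_n/n → 0`, `q_n → ∞` and `L(n)/L(q_n) → 1`. -/
theorem stmt1 {d : ℕ} (L : (Fin d → ℕ) → ℝ) (hL0 : ∀ x, L x ≠ 0)
    (hsv : SlowlyVarying d L) (hmono : Monotone L) :
    ∃ q : (Fin d → ℕ) → (Fin d → ℕ),
      (∀ n k, q n k ≤ n k) ∧
      (∀ k, Tendsto (fun n : Fin d → ℕ => (q n k : ℝ) / (n k : ℝ)) atTop (nhds 0)) ∧
      Tendsto (fun n : Fin d → ℕ => q n) atTop atTop ∧
      Tendsto (fun n : Fin d → ℕ => L n / L (q n)) atTop (nhds 1) := by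
  rcases Nat.eq_zero_or_pos d with hd | hd
  · subst hd
    refine ⟨id, fun n k => le_rfl, fun k => k.elim0, tendsto_id, ?_⟩
    have he : (fun n : Fin 0 → ℕ => L n / L n) = fun _ => 1 := by
      funext n; exact div_self (hL0 n)
    rw [show (fun n : Fin 0 → ℕ => L n / L (id n)) = fun n => L n / L n from rfl, he]
    exact tendsto_const_nhds
  · set k0 : Fin d := ⟨0, hd⟩ with hk0
    -- thresholds
    have H : ∀ m : ℕ, ∃ a : Fin d → ℕ, ∀ x, 1 ≤ m → a ≤ x →
        |L (fun k => m * x k) / L x - 1| ≤ 1 / (m : ℝ) := by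
      intro m
      rcases Nat.eq_zero_or_pos m with hm | hm
      · exact ⟨0, fun x h1 _ => absurd h1 (by omega)⟩
      · have h := hsv (fun _ => m) (fun _ => hm)
        have hε : (0:ℝ) < 1 / m := by positivity
        have h2 := Metric.tendsto_nhds.1 h (1/m) hε
        rw [eventually_atTop] at h2
        obtain ⟨a, ha⟩ := h2
        exact ⟨a, fun x _ hx => le_of_lt (by simpa [Real.dist_eq] using ha x hx)⟩
    choose N hN using H
    set Nb : ℕ → ℕ := fun m => m + Finset.univ.sup (N m) with hNbdef
    have hNb1 : ∀ m, m ≤ Nb m := fun m => Nat.le_add_right _ _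
    have hNbk : ∀ m k, N m k ≤ Nb m := fun m k =>
      (Finset.le_sup (Finset.mem_univ k)).trans (Nat.le_add_left _ _)
    set S : (Fin d → ℕ) → Finset ℕ := fun n =>
      (Finset.range (n k0 + 1)).filter (fun m => 1 ≤ m ∧ ∀ k, m * Nb m ≤ n k) with hSdef
    set M : (Fin d → ℕ) → ℕ := fun n =>
      if h : (S n).Nonempty then (S n).max' h else 1 with hMdef
    have hmemS : ∀ n m, 1 ≤ m → (∀ k, m * Nb m ≤ n k) → m ∈ S n := by
      intro n m h1 h2
      refine Finset.mem_filter.2 ⟨Finset.mem_range.2 ?_, h1, h2⟩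
      have : m ≤ m * Nb m := Nat.le_mul_of_pos_right m (lt_of_lt_of_le h1 (hNb1 m))
      have := le_trans this (h2 k0)
      omega
    have hMS : ∀ n, (S n).Nonempty → M n ∈ S n := by
      intro n h
      rw [hMdef]; simp only [dif_pos h]; exact (S n).max'_mem h
    have hMmem : ∀ n m, m ∈ S n → m ≤ M n := by
      intro n m hm
      have hne : (S n).Nonempty := ⟨m, hm⟩
      rw [hMdef]; simp only [dif_pos hne]; exact Finset.le_max' _ _ hm
    have hM1 : ∀ n, 1 ≤ M n := by
      intro n
      by_cases h : (S n).Nonempty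
      · exact (Finset.mem_filter.1 (hMS n h)).2.1
      · simp only [hMdef]; rw [dif_neg h]
    set q : (Fin d → ℕ) → (Fin d → ℕ) := fun n k => min (n k) (n k / M n + 1) with hqdef
    have hqle : ∀ n k, q n k ≤ n k := fun n k => min_le_left _ _
    have hq_nk_le : ∀ n k, n k ≤ M n * q n k := by
      intro n k
      rcases le_total (n k) (n k / M n + 1) with h | h
      · rw [hqdef]; simp only [min_eq_left h]
        exact Nat.le_mul_of_pos_left _ (hM1 n)
      · rw [hqdef]; simp only [min_eq_right h]
        have h2 : n k < n k / M n * (M n) + M n := Nat.lt_div_mul_add (hM1 n)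
        have h3 : M n * (n k / M n + 1) = n k / M n * (M n) + M n := by ring
        omega
    have hEvS : ∀ᶠ n : Fin d → ℕ in atTop, ∀ k, M n * Nb (M n) ≤ n k := by
      filter_upwards [eventually_ge_atTop (fun _ => Nb 1)] with n hn
      have h1 : (1:ℕ) ∈ S n := hmemS n 1 le_rfl (fun k => by simpa using hn k)
      exact (Finset.mem_filter.1 (hMS n ⟨1, h1⟩)).2.2
    have hqNb : ∀ n, (∀ k, M n * Nb (M n) ≤ n k) → ∀ k, Nb (M n) ≤ q n k := by
      intro n h1 k
      refine le_min ?_ ?_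
      · exact le_trans (Nat.le_mul_of_pos_left _ (hM1 n)) (h1 k)
      · refine le_trans ((Nat.le_div_iff_mul_le (hM1 n)).2 ?_) (Nat.le_succ _)
        rw [Nat.mul_comm]; exact h1 k
    have hMtop : Tendsto M atTop atTop := by
      rw [tendsto_atTop]
      intro b
      filter_upwards [eventually_ge_atTop (fun _ => (max 1 b) * Nb (max 1 b))] with n hn
      have hm1 : max 1 b ∈ S n := hmemS n _ (le_max_left _ _) (fun k => hn k)
      exact le_trans (le_max_right 1 b) (hMmem n _ hm1)
    have hM' : Tendsto (fun n => (M n : ℝ)) atTop atTop :=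
      tendsto_natCast_atTop_atTop.comp hMtop
    refine ⟨q, hqle, ?_, ?_, ?_⟩
    · -- (ii)
      intro k
      have hk' : Tendsto (fun n : Fin d → ℕ => ((n k : ℕ) : ℝ)) atTop atTop :=
        tendsto_natCast_atTop_atTop.comp
          (tendsto_atTop.2 fun b => eventually_atTop.2 ⟨fun _ => b, fun n hn => hn k⟩)
      refine squeeze_zero_norm' (a := fun n => 1/(M n : ℝ) + 1/((n k : ℕ) : ℝ)) ?_ ?_
      · filter_upwards [eventually_ge_atTop (fun _ => 1)] with n hn
        have hnk : (1:ℕ) ≤ n k := hn k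
        have hMpos : (0:ℝ) < M n := by exact_mod_cast hM1 n
        have hnkpos : (0:ℝ) < n k := by exact_mod_cast hnk
        rw [Real.norm_eq_abs, abs_of_nonneg (by positivity)]
        have hq' : (q n k : ℝ) ≤ (n k : ℝ)/(M n : ℝ) + 1 := by
          have h1 : q n k ≤ n k / M n + 1 := min_le_right _ _
          have h2 : ((n k / M n : ℕ) : ℝ) ≤ (n k : ℝ)/(M n : ℝ) := Nat.cast_div_le
          calc (q n k : ℝ) ≤ ((n k / M n + 1 : ℕ) : ℝ) := by exact_mod_cast h1
            _ = ((n k / M n : ℕ) : ℝ) + 1 := by push_cast; ring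
            _ ≤ (n k : ℝ)/(M n : ℝ) + 1 := by linarith
        calc (q n k : ℝ)/(n k : ℝ) ≤ ((n k : ℝ)/(M n : ℝ) + 1)/(n k : ℝ) := by gcongr
          _ = 1/(M n : ℝ) + 1/((n k : ℕ) : ℝ) := by field_simp
      · have := Tendsto.add hM'.inv_tendsto_atTop hk'.inv_tendsto_atTop
        simpa [one_div] using this
    · -- (iii)
      rw [tendsto_atTop]
      intro b
      filter_upwards [hEvS, hMtop.eventually (eventually_ge_atTop (Finset.univ.sup b))]
        with n h1 h2
      intro k
      calc b k ≤ Finset.univ.sup b := Finset.le_sup (Finset.mem_univ k)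
        _ ≤ M n := h2
        _ ≤ Nb (M n) := hNb1 _
        _ ≤ q n k := hqNb n h1 k
    · -- (iv)
      have hbound : ∀ᶠ n : Fin d → ℕ in atTop, |L n / L (q n) - 1| ≤ 1/(M n : ℝ) := by
        filter_upwards [hEvS] with n h1
        have hq := hqNb n h1
        have hle1 : q n ≤ n := fun k => hqle n k
        have hle2 : n ≤ fun k => M n * q n k := fun k => hq_nk_le n k
        have hsand := hN (M n) (q n) (hM1 n) (fun k => le_trans (hNbk (M n) k) (hq k))
        exact sandwich_ratio (hL0 (q n)) (hmono hle1) (hmono hle2) hsand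
      have h0 : Tendsto (fun n : Fin d → ℕ => L n / L (q n) - 1) atTop (nhds 0) :=
        squeeze_zero_norm' (by simpa [Real.norm_eq_abs] using hbound)
          (by have h := hM'.inv_tendsto_atTop; exact h)
      have := h0.add (tendsto_const_nhds (x := (1:ℝ)))
      simpa using this
end

section
/- Let X = {X_j, j ∈ ℤᵈ} be a wide-sense stationary random field with nonnegative covariance function R(m) = cov(X_0, X_m), and let K_X(n) = Σ_{−n ≤ j ≤ n} R(j) for n ∈ ℕᵈ. If K_X is slowly varying at infinity on ℕᵈ, then Var S(U_n) / (n₁⋯n_d · K_X(n)) → 1 as n → ∞, where U_n = {j ∈ ℤᵈ : 1 ≤ j ≤ n} and S(U_n) = Σ_{j ∈ U_n} X_j. -/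
open MeasureTheory Filter ProbabilityTheory
open scoped Classical BigOperators

/- ### auxiliary lemmas -/

lemma integrable_mul_of_memL2 {Ω : Type*} [MeasurableSpace Ω] {μ : Measure Ω}
    {f g : Ω → ℝ} (hf : MemLp f 2 μ) (hg : MemLp g 2 μ) :
    Integrable (fun ω => f ω * g ω) μ := by
  have h1 := (hf.add hg).integrable_sq
  have h2 := hf.integrable_sq
  have h3 := hg.integrable_sq
  refine (((h1.sub h2).sub h3).div_const 2).congr (Filter.Eventually.of_forall fun ω => ?_)
  simp only [Pi.add_apply, Pi.sub_apply]
  ring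

lemma var_sum_eq {Ω : Type*} [MeasurableSpace Ω] (μ : Measure Ω) [IsProbabilityMeasure μ]
    {ι : Type*} (s : Finset ι) (X : ι → Ω → ℝ) (hL2 : ∀ i, MemLp (X i) 2 μ) :
    var μ (fun ω => ∑ i ∈ s, X i ω) = ∑ i ∈ s, ∑ j ∈ s, cov μ (X i) (X j) := by
  have hint : ∀ i, Integrable (X i) μ := fun i => (hL2 i).integrable one_le_two
  have hY : ∀ i, MemLp (fun ω => X i ω - ∫ ω', X i ω' ∂μ) 2 μ :=
    fun i => (hL2 i).sub (memLp_const _)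
  have hprod : ∀ i j, Integrable
      (fun ω => (X i ω - ∫ ω', X i ω' ∂μ) * (X j ω - ∫ ω', X j ω' ∂μ)) μ :=
    fun i j => integrable_mul_of_memL2 (hY i) (hY j)
  have hmean : (∫ ω, (∑ i ∈ s, X i ω) ∂μ) = ∑ i ∈ s, ∫ ω, X i ω ∂μ :=
    integral_finset_sum _ (fun i _ => hint i)
  unfold var cov
  rw [hmean]
  have heq : (fun ω => (∑ i ∈ s, X i ω - ∑ i ∈ s, ∫ ω', X i ω' ∂μ) *
        (∑ i ∈ s, X i ω - ∑ i ∈ s, ∫ ω', X i ω' ∂μ))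
      = fun ω => ∑ i ∈ s, ∑ j ∈ s, (X i ω - ∫ ω', X i ω' ∂μ) * (X j ω - ∫ ω', X j ω' ∂μ) := by
    funext ω
    rw [← Finset.sum_sub_distrib, Finset.sum_mul_sum]
  rw [heq, integral_finset_sum _ (fun i _ => integrable_finset_sum _ (fun j _ => hprod i j))]
  exact Finset.sum_congr rfl fun i _ => integral_finset_sum _ (fun j _ => hprod i j)

lemma card_blockU {d : ℕ} (n : Fin d → ℕ) : (blockU n).card = ∏ k, n k := by
  rw [blockU, Pi.card_Icc]
  refine Finset.prod_congr rfl fun k _ => ?_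
  rw [Int.card_Icc]
  simp

lemma KsumF_nonneg {d : ℕ} {R : (Fin d → ℤ) → ℝ} (hR : ∀ m, 0 ≤ R m) (n : Fin d → ℕ) :
    0 ≤ KsumF R n := Finset.sum_nonneg fun j _ => hR j

lemma KsumF_mono {d : ℕ} {R : (Fin d → ℤ) → ℝ} (hR : ∀ m, 0 ≤ R m) {m n : Fin d → ℕ}
    (h : ∀ k, m k ≤ n k) : KsumF R m ≤ KsumF R n := by
  apply Finset.sum_le_sum_of_subset_of_nonneg
  · apply Finset.Icc_subset_Icc <;> intro k <;> simp only
    · exact neg_le_neg (by exact_mod_cast h k)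
    · exact_mod_cast h k
  · exact fun j _ _ => hR j

lemma mem_blockU {d : ℕ} {n : Fin d → ℕ} {j : Fin d → ℤ} :
    j ∈ blockU n ↔ ∀ k, 1 ≤ j k ∧ j k ≤ (n k : ℤ) := by
  simp only [blockU, Finset.mem_Icc, Pi.le_def, forall_and]

lemma mem_IccK {d : ℕ} {n : Fin d → ℕ} {j : Fin d → ℤ} :
    j ∈ Finset.Icc (fun k => -(n k : ℤ)) (fun k => (n k : ℤ)) ↔
      ∀ k, -(n k : ℤ) ≤ j k ∧ j k ≤ (n k : ℤ) := by
  simp only [Finset.mem_Icc, Pi.le_def, forall_and]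

lemma sum_upper {d : ℕ} (R : (Fin d → ℤ) → ℝ) (hR : ∀ m, 0 ≤ R m) (n : Fin d → ℕ) :
    ∑ i ∈ blockU n, ∑ j ∈ blockU n, R (i - j) ≤ (∏ k, (n k : ℝ)) * KsumF R n := by
  have hinner : ∀ i ∈ blockU n, ∑ j ∈ blockU n, R (i - j) ≤ KsumF R n := by
    intro i hi
    have h1 : ∑ j ∈ blockU n, R (i - j) = ∑ m ∈ (blockU n).image (fun j => i - j), R m := by
      rw [Finset.sum_image (fun x _ y _ h => by
        have : i - (i - x) = i - (i - y) := by rw [h]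
        simpa using this)]
    rw [h1]
    apply Finset.sum_le_sum_of_subset_of_nonneg _ (fun j _ _ => hR j)
    intro m hm
    rw [Finset.mem_image] at hm
    obtain ⟨j, hj, rfl⟩ := hm
    rw [mem_blockU] at hi hj
    rw [mem_IccK]
    intro k
    constructor
    · have := (hi k).1; have := (hj k).2; simp only [Pi.sub_apply]; omega
    · have := (hi k).2; have := (hj k).1; simp only [Pi.sub_apply]; omega
  calc ∑ i ∈ blockU n, ∑ j ∈ blockU n, R (i - j) ≤ ∑ _i ∈ blockU n, KsumF R n :=
        Finset.sum_le_sum hinner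
    _ = (∏ k, (n k : ℝ)) * KsumF R n := by
        rw [Finset.sum_const, nsmul_eq_mul, card_blockU]; push_cast; ring

lemma sum_lower {d : ℕ} (R : (Fin d → ℤ) → ℝ) (hR : ∀ m, 0 ≤ R m) (n m : Fin d → ℕ)
    (h2 : ∀ k, 2 * m k ≤ n k) :
    (∏ k, ((n k : ℝ) - 2 * (m k : ℝ))) * KsumF R m
      ≤ ∑ i ∈ blockU n, ∑ j ∈ blockU n, R (i - j) := by
  set A : Finset (Fin d → ℤ) :=
    Finset.Icc (fun k => (m k : ℤ) + 1) (fun k => (n k : ℤ) - (m k : ℤ)) with hA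
  have hAmem : ∀ {i : Fin d → ℤ}, i ∈ A ↔ ∀ k, (m k : ℤ) + 1 ≤ i k ∧ i k ≤ (n k : ℤ) - m k := by
    intro i; simp only [hA, Finset.mem_Icc, Pi.le_def, forall_and]
  have hAsub : A ⊆ blockU n := by
    intro i hi; rw [hAmem] at hi; rw [mem_blockU]; intro k
    have := (hi k).1; have := (hi k).2; have := h2 k
    constructor <;> omega
  have hAcard : (A.card : ℝ) = ∏ k, ((n k : ℝ) - 2 * (m k : ℝ)) := by
    rw [hA, Pi.card_Icc]
    push_cast
    refine Finset.prod_congr rfl fun k _ => ?_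
    rw [Int.card_Icc]
    have heq : ((n k : ℤ) - m k + 1 - ((m k : ℤ) + 1)) = ((n k : ℤ) - 2 * m k) := by ring
    rw [heq]
    have ht : ((n k : ℤ) - 2 * m k).toNat = n k - 2 * m k := by have := h2 k; omega
    rw [ht]
    push_cast [Nat.cast_sub (h2 k)]
    ring
  have hinner : ∀ i ∈ A, KsumF R m ≤ ∑ j ∈ blockU n, R (i - j) := by
    intro i hi
    have h1 : KsumF R m = ∑ j ∈ (Finset.Icc (fun k => -(m k : ℤ)) (fun k => (m k : ℤ))).image
        (fun m' => i - m'), R (i - j) := by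
      rw [Finset.sum_image (fun x _ y _ h => by
        have : i - (i - x) = i - (i - y) := by rw [h]
        simpa using this)]
      unfold KsumF
      refine Finset.sum_congr rfl fun m' _ => ?_
      congr 1
      simp
    rw [h1]
    apply Finset.sum_le_sum_of_subset_of_nonneg _ (fun j _ _ => hR _)
    intro j hj
    rw [Finset.mem_image] at hj
    obtain ⟨m', hm', rfl⟩ := hj
    rw [mem_IccK] at hm'
    rw [hAmem] at hi
    rw [mem_blockU]
    intro k
    have := (hi k).1; have := (hi k).2; have h1 := (hm' k).1; have h2 := (hm' k).2
    simp only [Pi.sub_apply]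
    constructor <;> omega
  calc (∏ k, ((n k : ℝ) - 2 * (m k : ℝ))) * KsumF R m = (A.card : ℝ) * KsumF R m := by
        rw [hAcard]
    _ = ∑ _i ∈ A, KsumF R m := by rw [Finset.sum_const, nsmul_eq_mul]
    _ ≤ ∑ i ∈ A, ∑ j ∈ blockU n, R (i - j) := Finset.sum_le_sum hinner
    _ ≤ ∑ i ∈ blockU n, ∑ j ∈ blockU n, R (i - j) :=
        Finset.sum_le_sum_of_subset_of_nonneg hAsub
          (fun i _ _ => Finset.sum_nonneg fun j _ => hR _)

set_option maxHeartbeats 1000000 in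
/-- if the covariance function is nonnegative and `K_X` is slowly varying then
`Var S(U_n) ∼ ⟨n⟩ K_X(n)` as `n → ∞`. -/

theorem stmt2 {Ω : Type*} [MeasurableSpace Ω] (μ : Measure Ω) [IsProbabilityMeasure μ]
    {d : ℕ} (X : (Fin d → ℤ) → Ω → ℝ) (R : (Fin d → ℤ) → ℝ)
    (hmeas : ∀ j, Measurable (X j)) (hL2 : ∀ j, MemLp (X j) 2 μ)
    (hcov : ∀ i j, cov μ (X i) (X j) = R (i - j)) (hR : ∀ m, 0 ≤ R m)
    (hK : SlowlyVarying d (KsumF R)) :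
    Tendsto (fun n : Fin d → ℕ =>
        var μ (partialSum X n) / ((∏ k, (n k : ℝ)) * KsumF R n)) atTop (nhds 1) := by
  classical
  have hVar : ∀ n : Fin d → ℕ,
      var μ (partialSum X n) = ∑ i ∈ blockU n, ∑ j ∈ blockU n, R (i - j) := by
    intro n
    have h := var_sum_eq μ (blockU n) X hL2
    have h2 : var μ (partialSum X n) = var μ (fun ω => ∑ i ∈ blockU n, X i ω) := rfl
    rw [h2, h]
    exact Finset.sum_congr rfl fun i _ => Finset.sum_congr rfl fun j _ => hcov i j
  -- eventual positivity of KsumF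
  have hKposEv : ∀ᶠ x : Fin d → ℕ in atTop, 0 < KsumF R x := by
    have h2 := hK (fun _ => 2) (fun _ => two_pos)
    filter_upwards [h2.eventually (eventually_gt_nhds (show (0:ℝ) < 1 by norm_num))] with x hx
    rcases lt_or_eq_of_le (KsumF_nonneg hR x) with h | h
    · exact h
    · exfalso; rw [← h, div_zero] at hx; exact lt_irrefl 0 hx
  -- n ↦ n / a tends to atTop
  have hmT : ∀ a : ℕ, 0 < a →
      Tendsto (fun n : Fin d → ℕ => (fun k => n k / a)) atTop atTop := by
    intro a ha
    rw [tendsto_atTop]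
    intro b
    filter_upwards [eventually_ge_atTop (fun k => a * b k)] with n hn
    intro k
    exact (Nat.le_div_iff_mul_le ha).2 (by rw [mul_comm]; exact hn k)
  rw [Metric.tendsto_nhds]
  intro ε hε
  set ε' := min ε 1 with hε'def
  have hε'0 : 0 < ε' := lt_min hε one_pos
  have hε'1 : ε' ≤ 1 := min_le_right _ _
  have hε'ε : ε' ≤ ε := min_le_left _ _
  obtain ⟨a, ha3, haB⟩ : ∃ a : ℕ, 3 ≤ a ∧ (4 * d : ℝ) / ε' ≤ a := by
    obtain ⟨a0, ha0⟩ := exists_nat_ge ((4 * d : ℝ) / ε')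
    exact ⟨max 3 a0, le_max_left _ _, ha0.trans (by exact_mod_cast le_max_right 3 a0)⟩
  have ha0 : 0 < a := by omega
  have haR : (0:ℝ) < a := by exact_mod_cast ha0
  have haR2 : (2:ℝ) ≤ a := by exact_mod_cast (by omega : 2 ≤ a)
  -- Bernoulli bound
  have hBern : 1 - ε' / 2 ≤ (1 - 2 / (a:ℝ)) ^ d := by
    have h1 : (-2:ℝ) ≤ -(2 / (a:ℝ)) := by
      rw [neg_le_neg_iff, div_le_iff₀ haR]; nlinarith
    have hb := one_add_mul_le_pow h1 d
    have h4d : 4 * (d:ℝ) ≤ a * ε' := by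
      rw [div_le_iff₀ hε'0] at haB; linarith
    have h2 : 1 - ε' / 2 ≤ 1 + (d:ℝ) * (-(2 / (a:ℝ))) := by
      have hq : (d:ℝ) * (2 / a) ≤ ε' / 2 := by
        rw [mul_div_assoc' , div_le_div_iff₀ haR two_pos]; nlinarith
      nlinarith
    calc 1 - ε' / 2 ≤ 1 + (d:ℝ) * (-(2 / (a:ℝ))) := h2
      _ ≤ (1 + -(2 / (a:ℝ))) ^ d := hb
      _ = (1 - 2 / (a:ℝ)) ^ d := by ring_nf
  have hPpos : (0:ℝ) < (1 - 2 / (a:ℝ)) ^ d := by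
    apply pow_pos
    have : 2 / (a:ℝ) ≤ 2 / 3 := by
      apply div_le_div_of_nonneg_left (by norm_num) (by norm_num)
      exact_mod_cast ha3
    linarith
  -- slow variation composed
  have hmTa := hmT a ha0
  have hρ := (hK (fun _ => 2 * a) (fun _ => by positivity)).comp hmTa
  have hq : Tendsto (fun n : Fin d → ℕ =>
      KsumF R (fun k => n k / a) / KsumF R (fun k => 2 * a * (n k / a))) atTop (nhds 1) := by
    have h := hρ.inv₀ one_ne_zero
    rw [inv_one] at h
    exact h.congr fun n => inv_div _ _
  have hKmEv : ∀ᶠ n : Fin d → ℕ in atTop, 0 < KsumF R (fun k => n k / a) :=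
    hmTa.eventually hKposEv
  have hqEv : ∀ᶠ n : Fin d → ℕ in atTop, 1 - ε' / 2 <
      KsumF R (fun k => n k / a) / KsumF R (fun k => 2 * a * (n k / a)) :=
    hq.eventually (eventually_gt_nhds (by linarith))
  have hnEv : ∀ᶠ n : Fin d → ℕ in atTop, ∀ k, a ≤ n k := by
    filter_upwards [eventually_ge_atTop (fun _ => a)] with n hn k
    exact hn k
  filter_upwards [hKposEv, hKmEv, hqEv, hnEv] with n hKn hKm hqn hna
  set m : Fin d → ℕ := fun k => n k / a with hm
  -- basic facts
  have hn1 : ∀ k, 1 ≤ n k := fun k => le_trans (by omega) (hna k)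
  have hprodn : (0:ℝ) < ∏ k, (n k : ℝ) :=
    Finset.prod_pos fun k _ => by exact_mod_cast hn1 k
  have hD : (0:ℝ) < (∏ k, (n k : ℝ)) * KsumF R n := mul_pos hprodn hKn
  have ham : ∀ k, a * m k ≤ n k := fun k => by
    rw [mul_comm]; exact Nat.div_mul_le_self (n k) a
  have h2m : ∀ k, 2 * m k ≤ n k := fun k =>
    le_trans (Nat.mul_le_mul_right _ (by omega : 2 ≤ a)) (ham k)
  have hm1 : ∀ k, 1 ≤ m k := fun k => (Nat.one_le_div_iff ha0).2 (hna k)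
  have hn2am : ∀ k, n k ≤ 2 * a * m k := by
    intro k
    have h1 : n k < (m k + 1) * a := (Nat.div_lt_iff_lt_mul ha0).1 (Nat.lt_succ_self _)
    have h2 : (m k + 1) * a ≤ (m k + m k) * a := Nat.mul_le_mul_right _ (by have := hm1 k; omega)
    calc n k ≤ (m k + 1) * a - 1 := by omega
      _ ≤ (m k + m k) * a := by omega
      _ = 2 * a * m k := by ring
  -- upper bound
  have hub : var μ (partialSum X n) / ((∏ k, (n k : ℝ)) * KsumF R n) ≤ 1 := by
    rw [div_le_one hD, hVar n]
    exact sum_upper R hR n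
  -- lower bound
  have hlb1 : (∏ k, ((n k : ℝ) - 2 * (m k : ℝ))) * KsumF R m ≤ var μ (partialSum X n) := by
    rw [hVar n]; exact sum_lower R hR n m h2m
  have hprodlb : (1 - 2 / (a:ℝ)) ^ d * ∏ k, (n k : ℝ) ≤ ∏ k, ((n k : ℝ) - 2 * (m k : ℝ)) := by
    have step : ∀ k : Fin d, (1 - 2 / (a:ℝ)) * (n k : ℝ) ≤ (n k : ℝ) - 2 * (m k : ℝ) := by
      intro k
      have h1 : (a:ℝ) * (m k : ℝ) ≤ (n k : ℝ) := by exact_mod_cast ham k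
      have h2 : (m k : ℝ) ≤ (n k : ℝ) / a := by
        rw [le_div_iff₀ haR]; nlinarith
      have h3 : 2 * (m k : ℝ) ≤ (2 / a) * (n k : ℝ) := by
        rw [div_mul_eq_mul_div, le_div_iff₀ haR]; nlinarith
      nlinarith
    calc (1 - 2 / (a:ℝ)) ^ d * ∏ k, (n k : ℝ)
        = ∏ k : Fin d, (1 - 2 / (a:ℝ)) * (n k : ℝ) := by
          rw [Finset.prod_mul_distrib, Finset.prod_const, Finset.card_univ, Fintype.card_fin]
      _ ≤ ∏ k, ((n k : ℝ) - 2 * (m k : ℝ)) := by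
          apply Finset.prod_le_prod
          · intro k _
            have h21 : 2 / (a:ℝ) ≤ 1 := by rw [div_le_one haR]; linarith
            have : (0:ℝ) ≤ 1 - 2 / (a:ℝ) := by linarith
            exact mul_nonneg this (Nat.cast_nonneg _)
          · exact fun k _ => step k
  have hKmono : KsumF R n ≤ KsumF R (fun k => 2 * a * m k) := KsumF_mono hR hn2am
  have hK2am : (0:ℝ) < KsumF R (fun k => 2 * a * m k) := lt_of_lt_of_le hKn hKmono
  have hqq : KsumF R m / KsumF R (fun k => 2 * a * m k) ≤ KsumF R m / KsumF R n :=
    div_le_div_of_nonneg_left hKm.le hKn hKmono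
  have hq' : 1 - ε' / 2 < KsumF R m / KsumF R n := lt_of_lt_of_le hqn hqq
  -- combine lower bound
  have hlb2 : (1 - 2 / (a:ℝ)) ^ d * (KsumF R m / KsumF R n)
      ≤ var μ (partialSum X n) / ((∏ k, (n k : ℝ)) * KsumF R n) := by
    have key : ((1 - 2 / (a:ℝ)) ^ d * ∏ k, (n k : ℝ)) * KsumF R m ≤ var μ (partialSum X n) := by
      calc ((1 - 2 / (a:ℝ)) ^ d * ∏ k, (n k : ℝ)) * KsumF R m
          ≤ (∏ k, ((n k : ℝ) - 2 * (m k : ℝ))) * KsumF R m :=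
            mul_le_mul_of_nonneg_right hprodlb (KsumF_nonneg hR m)
        _ ≤ var μ (partialSum X n) := hlb1
    rw [le_div_iff₀ hD]
    calc (1 - 2 / (a:ℝ)) ^ d * (KsumF R m / KsumF R n) * ((∏ k, (n k : ℝ)) * KsumF R n)
        = ((1 - 2 / (a:ℝ)) ^ d * ∏ k, (n k : ℝ)) * KsumF R m := by
          field_simp
      _ ≤ var μ (partialSum X n) := key
  have hlow : 1 - ε' < var μ (partialSum X n) / ((∏ k, (n k : ℝ)) * KsumF R n) := by
    have h1 : (1 - ε' / 2) * (1 - ε' / 2) < (1 - 2 / (a:ℝ)) ^ d * (KsumF R m / KsumF R n) := by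
      apply lt_of_le_of_lt (b := (1 - 2 / (a:ℝ)) ^ d * (1 - ε' / 2))
      · apply mul_le_mul_of_nonneg_right hBern (by linarith)
      · exact (mul_lt_mul_iff_right₀ hPpos).2 hq'
    have h0 : 1 - ε' ≤ (1 - ε' / 2) * (1 - ε' / 2) := by nlinarith [sq_nonneg ε']
    linarith [hlb2, h1, h0]
  rw [Real.dist_eq, abs_lt]
  constructor
  · linarith
  · linarith
end

section
/- Let X = {X_j, j ∈ ℤᵈ} be a wide-sense stationary random field with nonnegative covariance function R(m) = cov(X_0, X_m). Then for every integer q > 1 and every n ∈ ℕᵈ, K_X(n) ≤ (q/(q−1))ᵈ · Var S(U_{qn}) / ⟨qn⟩, where K_X(n) = Σ_{−n ≤ m ≤ n} R(m), U_{qn} = {j ∈ ℤᵈ : 1 ≤ j ≤ qn}, and ⟨qn⟩ = qᵈ n₁⋯n_d. -/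
open MeasureTheory Filter ProbabilityTheory
open scoped Classical BigOperators

set_option maxHeartbeats 1000000 in
/-- for every integer `q > 1` and every `n`,
`K_X(n) ≤ (q/(q-1))^d · Var S(U_{qn}) / ⟨qn⟩`. -/
theorem stmt6 {Ω : Type*} [MeasurableSpace Ω] (μ : Measure Ω) [IsProbabilityMeasure μ]
    {d : ℕ} (X : (Fin d → ℤ) → Ω → ℝ) (R : (Fin d → ℤ) → ℝ)
    (hmeas : ∀ j, Measurable (X j)) (hL2 : ∀ j, MemLp (X j) 2 μ)
    (hcov : ∀ i j, cov μ (X i) (X j) = R (i - j)) (hR : ∀ m, 0 ≤ R m) :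
    ∀ q : ℕ, 1 < q → ∀ n : Fin d → ℕ, (∀ k, 0 < n k) →
      KsumF R n ≤ ((q : ℝ) / ((q : ℝ) - 1)) ^ d *
        (var μ (partialSum X (fun k => q * n k)) / ∏ k, ((q : ℝ) * (n k : ℝ))) := by
  intro q hq n hn
  set m : Fin d → ℕ := fun k => q * n k with hm
  set Xb : (Fin d → ℤ) → Ω → ℝ := fun j ω => X j ω - ∫ ω', X j ω' ∂μ with hXb
  have hXbL2 : ∀ j, MemLp (Xb j) 2 μ := fun j => (hL2 j).sub (memLp_const _)
  have hhalf : (1 : ENNReal) / 1 = 1 / 2 + 1 / 2 := by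
    rw [one_div_one, ENNReal.add_halves]
  have hint : ∀ i j, Integrable (fun ω => Xb i ω * Xb j ω) μ := by
    intro i j
    have : MemLp (Xb i • Xb j) 1 μ := (hXbL2 j).smul (hXbL2 i)
    exact this.integrable le_rfl
  have hXint : ∀ j, Integrable (X j) μ := fun j => (hL2 j).integrable one_le_two
  -- variance as double sum of covariances
  have hvar : var μ (partialSum X m) = ∑ i ∈ blockU m, ∑ j ∈ blockU m, R (i - j) := by
    have hS : ∀ ω, partialSum X m ω - ∫ ω', partialSum X m ω' ∂μ
        = ∑ j ∈ blockU m, Xb j ω := by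
      intro ω
      simp only [partialSum]
      rw [integral_finset_sum _ (fun j _ => hXint j), ← Finset.sum_sub_distrib]
    calc var μ (partialSum X m)
        = ∫ ω, (∑ i ∈ blockU m, Xb i ω) * (∑ j ∈ blockU m, Xb j ω) ∂μ := by
          unfold var cov
          refine integral_congr_ae (Eventually.of_forall fun ω => ?_)
          simp only [hS ω]
      _ = ∫ ω, ∑ i ∈ blockU m, ∑ j ∈ blockU m, Xb i ω * Xb j ω ∂μ := by
          refine integral_congr_ae (Eventually.of_forall fun ω => ?_)
          simp only [Finset.sum_mul_sum]
      _ = ∑ i ∈ blockU m, ∑ j ∈ blockU m, ∫ ω, Xb i ω * Xb j ω ∂μ := by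
          rw [integral_finset_sum _ (fun i _ =>
            integrable_finset_sum _ (fun j _ => hint i j))]
          exact Finset.sum_congr rfl fun i _ =>
            integral_finset_sum _ (fun j _ => hint i j)
      _ = ∑ i ∈ blockU m, ∑ j ∈ blockU m, R (i - j) := by
          refine Finset.sum_congr rfl fun i _ => Finset.sum_congr rfl fun j _ => ?_
          rw [← hcov i j]; rfl
  -- combinatorial lower bound on the variance
  set I : Finset (Fin d → ℤ) :=
    Finset.Icc (fun k => -(n k : ℤ)) (fun k => (n k : ℤ)) with hI
  set T : (Fin d → ℤ) → Finset (Fin d → ℤ) := fun u =>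
    Finset.Icc (fun k => 1 + max 0 (-(u k))) (fun k => (m k : ℤ) - max 0 (u k)) with hT
  set C : ℝ := ∏ k, (((q : ℝ) - 1) * (n k : ℝ)) with hC
  have hq1R : (1 : ℝ) < (q : ℝ) := by exact_mod_cast hq
  have hCpos : 0 < C := by
    refine Finset.prod_pos fun k _ => mul_pos (by linarith) ?_
    exact_mod_cast hn k
  have hcard : ∀ u ∈ I, C ≤ ((T u).card : ℝ) := by
    intro u hu
    rw [Finset.mem_Icc] at hu
    have hT' : (T u).card = ∏ k, ((m k : ℤ) - max 0 (u k) + 1 - (1 + max 0 (-(u k)))).toNat := by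
      rw [hT]
      rw [Pi.card_Icc]
      exact Finset.prod_congr rfl fun k _ => Int.card_Icc _ _
    rw [hT', Nat.cast_prod]
    refine Finset.prod_le_prod (fun k _ => ?_) (fun k _ => ?_)
    · have : (0:ℝ) ≤ (n k : ℝ) := by positivity
      nlinarith
    · have h1 : -(n k : ℤ) ≤ u k := hu.1 k
      have h2 : u k ≤ (n k : ℤ) := hu.2 k
      have habs : max 0 (u k) + max 0 (-(u k)) ≤ (n k : ℤ) := by
        rcases le_total 0 (u k) with h | h
        · rw [max_eq_right h, max_eq_left (by omega)]; omega
        · rw [max_eq_left h, max_eq_right (by omega)]; omega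
      have hmk : (m k : ℤ) = (q : ℤ) * (n k : ℤ) := by
        simp only [hm]; push_cast; ring
      have hlen : ((q : ℤ) - 1) * (n k : ℤ) ≤
          (m k : ℤ) - max 0 (u k) + 1 - (1 + max 0 (-(u k))) := by
        calc ((q : ℤ) - 1) * (n k : ℤ) = (q : ℤ) * (n k : ℤ) - (n k : ℤ) := by ring
          _ = (m k : ℤ) - (n k : ℤ) := by rw [hmk]
          _ ≤ (m k : ℤ) - max 0 (u k) + 1 - (1 + max 0 (-(u k))) := by linarith
      have hnn : (0 : ℤ) ≤ (m k : ℤ) - max 0 (u k) + 1 - (1 + max 0 (-(u k))) := by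
        refine le_trans ?_ hlen
        have hq1 : (1 : ℤ) ≤ (q : ℤ) := by exact_mod_cast hq.le
        have : (0:ℤ) ≤ (n k : ℤ) := Int.ofNat_nonneg _
        nlinarith
      have h3 : ((q : ℤ) - 1) * (n k : ℤ) ≤
          (((m k : ℤ) - max 0 (u k) + 1 - (1 + max 0 (-(u k)))).toNat : ℤ) := by
        rwa [Int.toNat_of_nonneg hnn]
      exact_mod_cast h3
  have key : C * KsumF R n ≤ var μ (partialSum X m) := by
    rw [hvar, KsumF, Finset.mul_sum]
    -- lower-bound each term and reindex
    have step1 : ∀ u ∈ I, C * R u ≤ ∑ j ∈ T u, R u := by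
      intro u hu
      rw [Finset.sum_const, nsmul_eq_mul]
      exact mul_le_mul_of_nonneg_right (hcard u hu) (hR u)
    calc ∑ u ∈ I, C * R u ≤ ∑ u ∈ I, ∑ j ∈ T u, R u := Finset.sum_le_sum step1
      _ = ∑ p ∈ I.sigma T, R p.1 := by rw [Finset.sum_sigma]
      _ = ∑ x ∈ (I.sigma T).image (fun p => (p.2 + p.1, p.2)), R (x.1 - x.2) := by
          rw [Finset.sum_image]
          · exact Finset.sum_congr rfl fun p _ => by
              congr 1
              exact (add_sub_cancel_left p.2 p.1).symm
          · intro p _ r _ hpr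
            have h2 : p.2 = r.2 := congrArg Prod.snd hpr
            have h1 : p.2 + p.1 = r.2 + r.1 := congrArg Prod.fst hpr
            have h1' : p.1 = r.1 := by rw [h2] at h1; exact add_left_cancel h1
            exact Sigma.ext h1' (heq_of_eq h2)
      _ ≤ ∑ x ∈ blockU m ×ˢ blockU m, R (x.1 - x.2) := by
          refine Finset.sum_le_sum_of_subset_of_nonneg ?_ (fun x _ _ => hR _)
          intro x hx
          rw [Finset.mem_image] at hx
          obtain ⟨p, hp, rfl⟩ := hx
          rw [Finset.mem_sigma] at hp
          obtain ⟨hpu, hpj⟩ := hp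
          rw [hI, Finset.mem_Icc] at hpu
          rw [hT, Finset.mem_Icc] at hpj
          rw [Finset.mem_product, blockU, Finset.mem_Icc, Finset.mem_Icc]
          refine ⟨⟨fun k => ?_, fun k => ?_⟩, fun k => ?_, fun k => ?_⟩
          · have h1 := hpj.1 k
            have h2 := le_max_right (0 : ℤ) (-(p.1 k))
            dsimp only at h1 ⊢
            simp only [Pi.add_apply]
            linarith
          · have h1 := hpj.2 k
            have h2 := le_max_right (0 : ℤ) (p.1 k)
            dsimp only at h1 ⊢
            simp only [Pi.add_apply]
            linarith
          · have h1 := hpj.1 k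
            have h2 := le_max_left (0 : ℤ) (-(p.1 k))
            dsimp only at h1 ⊢
            linarith
          · have h1 := hpj.2 k
            have h2 := le_max_left (0 : ℤ) (p.1 k)
            dsimp only at h1 ⊢
            linarith
      _ = ∑ i ∈ blockU m, ∑ j ∈ blockU m, R (i - j) := by
          rw [Finset.sum_product]
  -- conclude by algebra
  have hfin : KsumF R n ≤ var μ (partialSum X m) / C :=
    (le_div_iff₀ hCpos).mpr (by linarith [key])
  refine hfin.trans_eq ?_
  have hq1 : (1 : ℝ) < (q : ℝ) := by exact_mod_cast hq
  have hq0 : ((q : ℝ)) ≠ 0 := by positivity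
  have hq10 : (q : ℝ) - 1 ≠ 0 := by linarith
  have hP : (∏ k, (n k : ℝ)) ≠ 0 :=
    (Finset.prod_pos fun k _ => by exact_mod_cast hn k).ne'
  rw [hC, Finset.prod_mul_distrib, Finset.prod_mul_distrib, Finset.prod_const,
    Finset.prod_const, Finset.card_univ, Fintype.card_fin, div_pow]
  field_simp
end
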